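/- Equivalent form of the characterization via paths: the problem is rationalizable if and only if for all same-type individuals a, b such that there exists a directed path from a to b in G^big, μ(a) = μ(b). -/

import Mathlib

/-- Arc of the allocation graph G^big: `(a,b)` is an arc iff `μ a = μE b`. -/
def arcBig {A H : Type*} (μE μ : A → H) (a b : A) : Prop := μ a = μE b

/-- Two agents lie in the same strongly connected component of G^big. -/
def sameSCC {A H : Type*} (μE μ : A → H) (a b : A) : Prop :=
  Relation.ReflTransGen (arcBig μE μ) a b ∧ Relation.ReflTransGen (arcBig μE μ) b a

/-- For each house type, the number of agents allocated it equals the number endowed with it. -/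
def BalancedAlloc {A H : Type*} (μE μ : A → H) : Prop :=
  ∀ h : H, Nat.card {a : A // μ a = h} = Nat.card {a : A // μE a = h}

/-- A directed cycle: a nonempty list of distinct vertices with consecutive arcs,
and an arc from the last vertex back to the first. A single vertex with a
self-loop is a cycle of length 1. -/
def IsCycle {V : Type*} (R : V → V → Prop) (l : List V) : Prop :=
  l ≠ [] ∧ l.Nodup ∧ l.Chain' R ∧ ∀ h : l ≠ [], R (l.getLast h) (l.head h)

/-- A blocking coalition: a nonempty coalition `C` and a reallocation `μ'` of its
own endowments (as multisets) making every member weakly better off and at least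
one member strictly better off, w.r.t. the strict type-preference profile `P`. -/
def Blocking {A H T : Type*} (tp : A → T) (μE μ : A → H)
    (P : T → LinearOrder H) : Prop :=
  ∃ (C : Finset A) (μ' : A → H),
    C.Nonempty ∧
    C.val.map μ' = C.val.map μE ∧
    (∀ a ∈ C, (P (tp a)).le (μ a) (μ' a)) ∧
    (∃ a ∈ C, (P (tp a)).lt (μ a) (μ' a))

/-- The allocation `μ` is rationalizable: some strict type-preference profile places
it in the strong core (no blocking coalition). -/
def Rationalizable {A H T : Type*} (tp : A → T) (μE μ : A → H) : Prop :=
  ∃ P : T → LinearOrder H, ¬ Blocking tp μE μ P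

section AuxStmt12

variable {A H T : Type*}

lemma stmt12_filter_card_eq [Fintype A] [DecidableEq H] {μE μ : A → H} (hbal : BalancedAlloc μE μ) (h : H) :
    (Finset.univ.filter fun x => μ x = h).card = (Finset.univ.filter fun x => μE x = h).card := by
  have := hbal h
  rwa [Nat.card_eq_fintype_card, Nat.card_eq_fintype_card, Fintype.card_subtype,
    Fintype.card_subtype] at this

lemma stmt12_exists_mu_eq [Fintype A] [DecidableEq H] {μE μ : A → H} (hbal : BalancedAlloc μE μ) (y : A) :
    ∃ x, μ x = μE y := by
  classical
  have hc := stmt12_filter_card_eq hbal (μE y)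
  have hpos : 0 < (Finset.univ.filter fun x => μ x = μE y).card := by
    rw [hc]
    exact Finset.card_pos.2 ⟨y, by simp⟩
  obtain ⟨x, hx⟩ := Finset.card_pos.mp hpos
  rw [Finset.mem_filter] at hx
  exact ⟨x, hx.2⟩

lemma stmt12_exists_endow_eq [Fintype A] [DecidableEq H] {μE μ : A → H} (hbal : BalancedAlloc μE μ) (x : A) :
    ∃ y, μE y = μ x := by
  classical
  have hc := stmt12_filter_card_eq hbal (μ x)
  have hpos : 0 < (Finset.univ.filter fun y => μE y = μ x).card := by
    rw [← hc]
    exact Finset.card_pos.2 ⟨x, by simp⟩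
  obtain ⟨y, hy⟩ := Finset.card_pos.mp hpos
  rw [Finset.mem_filter] at hy
  exact ⟨y, hy.2⟩

lemma stmt12_arc_back [Fintype A] [Fintype H] [DecidableEq A] [DecidableEq H] {μE μ : A → H} (hbal : BalancedAlloc μE μ)
    {a b : A} (hab : arcBig μE μ a b) : Relation.ReflTransGen (arcBig μE μ) b a := by
  classical
  set r := arcBig μE μ with hr
  set S : Finset A := Finset.univ.filter fun x => Relation.ReflTransGen r b x with hSdef
  have hmem : ∀ x, x ∈ S ↔ Relation.ReflTransGen r b x := fun x => by simp [hSdef]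
  have hle : ∀ h : H,
      (S.filter fun x => μ x = h).card ≤ (S.filter fun x => μE x = h).card := by
    intro h
    rcases Nat.eq_zero_or_pos (S.filter fun x => μ x = h).card with h0 | hpos
    · simp [h0]
    · obtain ⟨x, hx⟩ := Finset.card_pos.mp hpos
      rw [Finset.mem_filter] at hx
      have hsub : (Finset.univ.filter fun y => μE y = h) ⊆ S.filter fun y => μE y = h := by
        intro y hy
        rw [Finset.mem_filter] at hy ⊢
        refine ⟨(hmem y).2 ?_, hy.2⟩
        exact ((hmem x).1 hx.1).tail (show r x y from hx.2.trans hy.2.symm)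
      calc (S.filter fun x => μ x = h).card
          ≤ (Finset.univ.filter fun x => μ x = h).card :=
            Finset.card_le_card (Finset.filter_subset_filter _ (Finset.subset_univ S))
        _ = (Finset.univ.filter fun x => μE x = h).card := stmt12_filter_card_eq hbal h
        _ ≤ (S.filter fun x => μE x = h).card := Finset.card_le_card hsub
  have hsum1 : ∑ h : H, (S.filter fun x => μ x = h).card = S.card :=
    (Finset.card_eq_sum_card_fiberwise fun x _ => Finset.mem_univ (μ x)).symm
  have hsum2 : ∑ h : H, (S.filter fun x => μE x = h).card = S.card :=
    (Finset.card_eq_sum_card_fiberwise fun x _ => Finset.mem_univ (μE x)).symm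
  have heq : ∀ h : H,
      (S.filter fun x => μ x = h).card = (S.filter fun x => μE x = h).card := by
    have := (Finset.sum_eq_sum_iff_of_le fun h _ => hle h).mp (by rw [hsum1, hsum2])
    exact fun h => this h (Finset.mem_univ h)
  have hbmem : b ∈ S.filter fun x => μE x = μ a := by
    rw [Finset.mem_filter]
    exact ⟨(hmem b).2 Relation.ReflTransGen.refl, hab.symm⟩
  have hpos : 0 < (S.filter fun x => μ x = μ a).card := by
    rw [heq]
    exact Finset.card_pos.2 ⟨b, hbmem⟩
  obtain ⟨x, hx⟩ := Finset.card_pos.mp hpos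
  rw [Finset.mem_filter] at hx
  have hsub : (Finset.univ.filter fun y => μE y = μ a) ⊆ S.filter fun y => μE y = μ a := by
    intro y hy
    rw [Finset.mem_filter] at hy ⊢
    refine ⟨(hmem y).2 ?_, hy.2⟩
    exact ((hmem x).1 hx.1).tail (show r x y from hx.2.trans hy.2.symm)
  have hfull : S.filter (fun y => μ y = μ a) = Finset.univ.filter fun y => μ y = μ a := by
    apply Finset.eq_of_subset_of_card_le
      (Finset.filter_subset_filter _ (Finset.subset_univ S))
    calc (Finset.univ.filter fun y => μ y = μ a).card
        = (Finset.univ.filter fun y => μE y = μ a).card := stmt12_filter_card_eq hbal (μ a)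
      _ ≤ (S.filter fun y => μE y = μ a).card := Finset.card_le_card hsub
      _ = (S.filter fun y => μ y = μ a).card := (heq (μ a)).symm
  have ha : a ∈ S.filter fun y => μ y = μ a := by
    rw [hfull, Finset.mem_filter]
    exact ⟨Finset.mem_univ a, rfl⟩
  rw [Finset.mem_filter] at ha
  exact (hmem a).1 ha.1

lemma stmt12_reach_symm [Fintype A] [Fintype H] [DecidableEq A] [DecidableEq H] {μE μ : A → H} (hbal : BalancedAlloc μE μ)
    {a b : A} (h : Relation.ReflTransGen (arcBig μE μ) a b) :
    Relation.ReflTransGen (arcBig μE μ) b a := by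
  induction h with
  | refl => exact Relation.ReflTransGen.refl
  | tail _ h2 ih => exact (stmt12_arc_back hbal h2).trans ih

lemma stmt12_exists_nodup_chain {α : Type*} {r : α → α → Prop} {b a : α}
    (h : Relation.TransGen r b a) :
    ∃ (l : List α) (hne : l ≠ []), l.Nodup ∧ List.Chain r b l ∧ l.getLast hne = a := by
  induction h using Relation.TransGen.head_induction_on with
  | single hba =>
    exact ⟨[a], by simp, by simp, List.chain_cons.mpr ⟨hba, List.Chain.nil⟩, rfl⟩
  | head hbc _ IH =>
    obtain ⟨l, hne, hnd, hch, hlast⟩ := IH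
    rename_i c _
    by_cases hcl : c ∈ l
    · obtain ⟨l1, l2, rfl⟩ := List.append_of_mem hcl
      rcases eq_or_ne l2 [] with rfl | h2
      · have hca : c = a := by
          rw [← hlast]
          exact (List.getLast_append_of_right_ne_nil l1 [c] (by simp)).symm
        exact ⟨[a], by simp, by simp, List.chain_cons.mpr ⟨hca ▸ hbc, List.Chain.nil⟩, rfl⟩
      · have hch2 : List.Chain r c l2 := by
          have h1 : List.Chain' r ((c :: l1) ++ (c :: l2)) := hch
          exact (List.isChain_append.mp h1).2.1
        refine ⟨c :: l2, by simp, ?_, List.chain_cons.mpr ⟨hbc, hch2⟩, ?_⟩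
        · exact (List.sublist_append_right l1 (c :: l2)).nodup hnd
        · rw [← hlast]
          exact (List.getLast_append_of_right_ne_nil l1 (c :: l2) (by simp)).symm
    · refine ⟨c :: l, by simp, List.nodup_cons.mpr ⟨hcl, hnd⟩,
        List.chain_cons.mpr ⟨hbc, hch⟩, ?_⟩
      rw [List.getLast_cons hne]
      exact hlast

lemma stmt12_coalition_of_chain [DecidableEq A] (μE μ : A → H) :
    ∀ (l : List A) (hne : l ≠ []), l.Nodup → l.Chain' (arcBig μE μ) →
    ∃ μ' : A → H, (l.map μ').Perm (l.map μE) ∧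
      (∀ x ∈ l, x ≠ l.getLast hne → μ' x = μ x) ∧ μ' (l.getLast hne) = μE (l.head hne) := by
  intro l
  induction l with
  | nil => intro hne; exact absurd rfl hne
  | cons v l' ih =>
    intro hne hnd hch
    cases l' with
    | nil =>
      refine ⟨fun _ => μE v, by simp, ?_, rfl⟩
      intro x hx hxne
      simp only [List.mem_singleton] at hx
      exact absurd hx hxne
    | cons w t =>
      have hv : v ∉ w :: t := (List.nodup_cons.mp hnd).1
      have hnd' : (w :: t).Nodup := (List.nodup_cons.mp hnd).2
      have harc : arcBig μE μ v w := (List.isChain_cons_cons.mp hch).1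
      have hch' : (w :: t).Chain' (arcBig μE μ) := (List.isChain_cons_cons.mp hch).2
      obtain ⟨μ1, hperm, hkeep, hlastval⟩ := ih (by simp) hnd' hch'
      set L := (w :: t).getLast (by simp) with hL
      have hLmem : L ∈ w :: t := by rw [hL]; exact List.getLast_mem _
      have hvL : v ≠ L := fun h => hv (h ▸ hLmem)
      have hlcons : (v :: w :: t).getLast (by simp) = L := by
        rw [List.getLast_cons (by simp : (w :: t) ≠ [])]
      refine ⟨fun x => if x = L then μE v else μ x, ?_, ?_, ?_⟩
      · -- permutation
        have hDL : (w :: t).dropLast ++ [L] = w :: t := by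
          rw [hL]; exact List.dropLast_append_getLast _
        set D := (w :: t).dropLast with hD
        have hLD : L ∉ D := by
          have hnd2 : (D ++ [L]).Nodup := by rw [hDL]; exact hnd'
          have hdisj := (List.nodup_append'.mp hnd2).2.2
          intro hmem
          exact hdisj hmem (by simp)
        have hmapD : D.map (fun x => if x = L then μE v else μ x) = D.map μ1 := by
          apply List.map_congr_left
          intro x hx
          have hxL : x ≠ L := fun h => hLD (h ▸ hx)
          have hxmem : x ∈ w :: t := hDL ▸ List.mem_append_left [L] hx
          rw [if_neg hxL]
          exact (hkeep x hxmem hxL).symm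
        have hmap1 : (w :: t).map (fun x => if x = L then μE v else μ x)
            = D.map μ1 ++ [μE v] := by
          conv_lhs => rw [← hDL]
          rw [List.map_append, hmapD]
          simp
        have hmap2 : (w :: t).map μ1 = D.map μ1 ++ [μE w] := by
          conv_lhs => rw [← hDL]
          rw [List.map_append]
          simp [hlastval]
        have hperm' : (D.map μ1 ++ [μE w]).Perm ((w :: t).map μE) := hmap2 ▸ hperm
        have hveq : (if v = L then μE v else μ v) = μE w := by rw [if_neg hvL]; exact harc
        show (List.map (fun x => if x = L then μE v else μ x) (v :: w :: t)).Perm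
          (List.map μE (v :: w :: t))
        simp only [List.map_cons] at hmap1 hperm' ⊢
        rw [hmap1, hveq]
        have s1 : (μE w :: (List.map μ1 D ++ [μE v])).Perm (μE w :: (μE v :: List.map μ1 D)) :=
          (List.perm_append_singleton _ _).cons _
        have s2 : (μE w :: (μE v :: List.map μ1 D)).Perm (μE v :: (μE w :: List.map μ1 D)) :=
          List.Perm.swap _ _ _
        have s3 : (μE v :: (μE w :: List.map μ1 D)).Perm (μE v :: (List.map μ1 D ++ [μE w])) :=
          ((List.perm_append_singleton _ _).symm).cons _
        have s4 : (μE v :: (List.map μ1 D ++ [μE w])).Perm (μE v :: (μE w :: List.map μE t)) :=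
          hperm'.cons _
        exact ((s1.trans s2).trans s3).trans s4
      · intro x hx hxne
        rw [hlcons] at hxne
        show (if x = L then μE v else μ x) = μ x
        exact if_neg hxne
      · rw [hlcons]
        show (if L = L then μE v else μ L) = μE ((v :: w :: t).head (by simp))
        rw [if_pos rfl]
        rfl

lemma stmt12_endow_reach [Fintype A] [Fintype H] [DecidableEq A] [DecidableEq H]
    {μE μ : A → H} (hbal : BalancedAlloc μE μ) {y1 y2 : A} (h : μE y1 = μE y2) :
    Relation.ReflTransGen (arcBig μE μ) y1 y2 := by
  obtain ⟨x, hx⟩ := stmt12_exists_mu_eq hbal y1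
  exact (stmt12_arc_back hbal (show arcBig μE μ x y1 from hx)).tail
    (show arcBig μE μ x y2 from hx.trans h)

end AuxStmt12

section Aux2
variable {A H T : Type*}

lemma stmt12_blocking_lt [DecidableEq A] {tp : A → T} {μE μ : A → H}
    {P : T → LinearOrder H} (hP : ¬ Blocking tp μE μ P)
    {b a : A} (hne : b ≠ a) (hreach : Relation.ReflTransGen (arcBig μE μ) b a) :
    ¬ (P (tp a)).lt (μ a) (μ b) := by
  intro hlt
  have htg : Relation.TransGen (arcBig μE μ) b a := by
    rcases Relation.reflTransGen_iff_eq_or_transGen.mp hreach with h | h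
    · exact absurd h.symm hne
    · exact h
  obtain ⟨l, hlne, hnd, hch, hlast⟩ := stmt12_exists_nodup_chain htg
  have hch' : l.Chain' (arcBig μE μ) :=
    (show List.Chain' (arcBig μE μ) (b :: l) from hch).tail
  have hbh : arcBig μE μ b (l.head hlne) := by
    cases l with
    | nil => exact absurd rfl hlne
    | cons x xs => exact (List.chain_cons.mp hch).1
  obtain ⟨μ', hperm, hkeep, hlastval⟩ := stmt12_coalition_of_chain μE μ l hlne hnd hch'
  have hval : l.toFinset.val = (l : Multiset A) := by
    rw [List.toFinset_val, List.dedup_eq_self.mpr hnd]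
  have hmain : μ' a = μ b := by
    rw [← hlast, hlastval]
    exact hbh.symm
  have hamem : a ∈ l.toFinset := List.mem_toFinset.mpr (hlast ▸ List.getLast_mem hlne)
  apply hP
  refine ⟨l.toFinset, μ', ⟨a, hamem⟩, ?_, ?_, ⟨a, hamem, ?_⟩⟩
  · rw [hval, Multiset.map_coe, Multiset.map_coe]
    exact Multiset.coe_eq_coe.mpr hperm
  · intro x hx
    by_cases hxa : x = a
    · subst hxa
      rw [hmain]
      letI := P (tp x)
      exact le_of_lt hlt
    · rw [hkeep x (List.mem_toFinset.mp hx) fun h => hxa (h.trans hlast)]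
      letI := P (tp x)
      exact le_refl _
  · rw [hmain]
    exact hlt

end Aux2

/-- path form: the problem is rationalizable iff any two same-type
agents connected by a directed path in G^big receive the same house type. -/
theorem stmt12 {A H T : Type*} [Fintype A] [Fintype H] (tp : A → T)
    (μE μ : A → H) (hbal : BalancedAlloc μE μ) :
    Rationalizable tp μE μ ↔
      ∀ a b : A, tp a = tp b → Relation.ReflTransGen (arcBig μE μ) a b → μ a = μ b := by
  classical
  constructor
  · rintro ⟨P, hP⟩ a b htp hab
    by_contra hne'
    have hne : a ≠ b := fun h => hne' (h ▸ rfl)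
    have hba : Relation.ReflTransGen (arcBig μE μ) b a := stmt12_reach_symm hbal hab
    letI := P (tp a)
    rcases lt_trichotomy (μ a) (μ b) with h | h | h
    · exact stmt12_blocking_lt hP hne.symm hba h
    · exact hne' h
    · have h' : (P (tp b)).lt (μ b) (μ a) := by rw [← htp]; exact h
      exact stmt12_blocking_lt hP hne hab h'
  · intro hcond
    have hsymm : ∀ {x y : A}, Relation.ReflTransGen (arcBig μE μ) x y →
        Relation.ReflTransGen (arcBig μE μ) y x := fun h => stmt12_reach_symm hbal h
    set s : Setoid A := ⟨fun x y => Relation.ReflTransGen (arcBig μE μ) x y,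
      ⟨fun _ => .refl, fun h => hsymm h, fun h1 h2 => h1.trans h2⟩⟩ with hs
    haveI : Finite (Quotient s) := Quotient.finite s
    obtain ⟨fQ, hfQ⟩ := Countable.exists_injective_nat (Quotient s)
    set cls : A → ℕ := fun x => fQ (Quotient.mk s x) with hcls
    have cls_eq : ∀ {x y : A}, Relation.ReflTransGen (arcBig μE μ) x y → cls x = cls y :=
      fun h => congrArg fQ (Quotient.sound h)
    have cls_inj : ∀ {x y : A}, cls x = cls y → Relation.ReflTransGen (arcBig μE μ) x y :=
      fun h => Quotient.exact (hfQ h)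
    obtain ⟨e, he⟩ := Countable.exists_injective_nat H
    set M : ℕ := (Finset.univ.sup e) + 1 with hMdef
    have heM : ∀ h : H, e h < M := fun h =>
      Nat.lt_succ_of_le (Finset.le_sup (Finset.mem_univ h))
    set g : H → ℕ := fun h => if hx : ∃ y, μE y = h then cls hx.choose else 0 with hg
    have g_endow : ∀ y : A, g (μE y) = cls y := by
      intro y
      have hx : ∃ y', μE y' = μE y := ⟨y, rfl⟩
      show (if hx : ∃ y', μE y' = μE y then cls hx.choose else 0) = cls y
      rw [dif_pos hx]
      exact cls_eq (stmt12_endow_reach hbal hx.choose_spec)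
    have g_mu : ∀ x : A, g (μ x) = cls x := by
      intro x
      obtain ⟨y, hy⟩ := stmt12_exists_endow_eq hbal x
      rw [← hy, g_endow y]
      exact (cls_eq (Relation.ReflTransGen.single (show arcBig μE μ x y from hy.symm))).symm
    set tie : T → H → ℕ := fun t h => if ∃ c, tp c = t ∧ μ c = h then M + e h else e h
      with htie
    set f : T → H → (ℕᵒᵈ ×ₗ ℕ) := fun t h => toLex (OrderDual.toDual (g h), tie t h) with hf
    have finj : ∀ t, Function.Injective (f t) := by
      intro t h1 h2 hEq
      simp only [hf] at hEq
      have h12 : (OrderDual.toDual (g h1), tie t h1)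
          = (OrderDual.toDual (g h2), tie t h2) := toLex.injective hEq
      have ht12 : tie t h1 = tie t h2 := congrArg Prod.snd h12
      simp only [htie] at ht12
      by_cases c1 : ∃ c, tp c = t ∧ μ c = h1 <;> by_cases c2 : ∃ c, tp c = t ∧ μ c = h2
      · rw [if_pos c1, if_pos c2] at ht12
        exact he (Nat.add_left_cancel ht12)
      · rw [if_pos c1, if_neg c2] at ht12
        exact absurd ht12 (by have := heM h2; omega)
      · rw [if_neg c1, if_pos c2] at ht12
        exact absurd ht12 (by have := heM h1; omega)
      · rw [if_neg c1, if_neg c2] at ht12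
        exact he ht12
    refine ⟨fun t => LinearOrder.lift' (f t) (finj t), ?_⟩
    rintro ⟨C, μ', hCne, hmap, hweak, a0, ha0, hlt0⟩
    have hstrict : ∀ a ∈ C, μ' a ≠ μ a → g (μ' a) < cls a := by
      intro a haC hnea
      have hlef : f (tp a) (μ a) ≤ f (tp a) (μ' a) := hweak a haC
      have hfne : f (tp a) (μ a) ≠ f (tp a) (μ' a) := fun hEq =>
        hnea ((finj (tp a) hEq).symm)
      have hltf : f (tp a) (μ a) < f (tp a) (μ' a) := lt_of_le_of_ne hlef hfne
      simp only [hf] at hltf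
      rcases Prod.Lex.lt_iff.mp hltf with h1 | ⟨h1, h2⟩
      · have hgl : g (μ' a) < g (μ a) := h1
        rwa [g_mu a] at hgl
      · exfalso
        have hg_eq : g (μ' a) = g (μ a) := (OrderDual.toDual_inj.mp h1).symm
        have htie_lt : tie (tp a) (μ a) < tie (tp a) (μ' a) := h2
        have hc1 : ∃ c, tp c = tp a ∧ μ c = μ a := ⟨a, rfl, rfl⟩
        by_cases hc2 : ∃ c, tp c = tp a ∧ μ c = μ' a
        · obtain ⟨c, hct, hcmu⟩ := hc2
          have h3 : cls c = cls a := by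
            have h4 := g_mu c
            rw [hcmu] at h4
            rw [← h4, hg_eq, g_mu a]
          have h5 := hcond c a hct (cls_inj h3)
          exact hnea (by rw [← hcmu, h5])
        · have hA : tie (tp a) (μ a) = M + e (μ a) := by
            simp only [htie]; rw [if_pos hc1]
          have hB : tie (tp a) (μ' a) = e (μ' a) := by
            simp only [htie]; rw [if_neg hc2]
          rw [hA, hB] at htie_lt
          exact absurd htie_lt (by have := heM (μ' a); omega)
    have hweak' : ∀ a ∈ C, g (μ' a) ≤ cls a := by
      intro a haC
      by_cases hnea : μ' a = μ a
      · rw [hnea, g_mu a]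
      · exact le_of_lt (hstrict a haC hnea)
    have hstrict0 : μ' a0 ≠ μ a0 := by
      intro hEq
      rw [hEq] at hlt0
      exact lt_irrefl _ (show f (tp a0) (μ a0) < f (tp a0) (μ a0) from hlt0)
    have hsum_lt : ∑ a ∈ C, g (μ' a) < ∑ a ∈ C, cls a :=
      Finset.sum_lt_sum hweak' ⟨a0, ha0, hstrict a0 ha0 hstrict0⟩
    have hsum_eq : ∑ a ∈ C, g (μ' a) = ∑ a ∈ C, cls a := by
      calc ∑ a ∈ C, g (μ' a) = (C.val.map fun a => g (μ' a)).sum :=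
            Finset.sum_eq_multiset_sum _ _
        _ = ((C.val.map μ').map g).sum := by
            rw [Multiset.map_map]; rfl
        _ = ((C.val.map μE).map g).sum := by rw [hmap]
        _ = (C.val.map fun a => g (μE a)).sum := by
            rw [Multiset.map_map]; rfl
        _ = (C.val.map fun a => cls a).sum := by
            congr 1
            apply Multiset.map_congr rfl
            intro x _
            exact g_endow x
        _ = ∑ a ∈ C, cls a := (Finset.sum_eq_multiset_sum _ _).symm
    exact absurd hsum_eq (ne_of_lt hsum_lt)
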